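/- Uniqueness of joins in a polymonad: if a polymonad (in the categorical sense) contains two joins μ1 : M N ⇒ P and μ2 : M N ⇒ P between the same composite M N and functor P, then μ1 = μ2. -/

import Mathlib

open CategoryTheory

universe v u

/-- A categorical polymonad: a set of endofunctors containing the identity functor,
and a set of joins `μ : M N ⇒ P` (natural transformations `N ⋙ M ⟶ P`,
i.e. with `M` applied outermost), satisfying the Identity, Diamond and
Associativity laws. -/
structure CatPolymonad (C : Type u) [Category.{v} C] where
  F : Set (C ⥤ C)
  J : ∀ M N P : C ⥤ C, Set ((N ⋙ M) ⟶ P)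
  id_mem : 𝟭 C ∈ F
  id_join_left : ∀ M ∈ F, (Functor.leftUnitor M).hom ∈ J M (𝟭 C) M
  id_join_right : ∀ M ∈ F, (Functor.rightUnitor M).hom ∈ J (𝟭 C) M M
  diamond : ∀ R S T W : C ⥤ C, R ∈ F → S ∈ F → T ∈ F → W ∈ F →
    ((∃ U ∈ F, (∃ j, j ∈ J R S U) ∧ (∃ j, j ∈ J U T W)) ↔
     (∃ V ∈ F, (∃ j, j ∈ J S T V) ∧ (∃ j, j ∈ J R V W)))
  assoc : ∀ (R S T U V W : C ⥤ C),
    ∀ μ1 ∈ J R S U, ∀ μ2 ∈ J U T W, ∀ μ3 ∈ J S T V, ∀ μ4 ∈ J R V W,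
      Functor.whiskerLeft T μ1 ≫ μ2 = Functor.whiskerRight μ3 R ≫ μ4

/-- Uniqueness of joins: two joins `μ1, μ2 : M N ⇒ P` in a polymonad are equal. -/
theorem polymonad_join_unique {C : Type u} [Category.{v} C] (P : CatPolymonad C)
    (M N Q : C ⥤ C) (hM : M ∈ P.F) (hN : N ∈ P.F) (hQ : Q ∈ P.F)
    (μ1 μ2 : (N ⋙ M) ⟶ Q) (h1 : μ1 ∈ P.J M N Q) (h2 : μ2 ∈ P.J M N Q) :
    μ1 = μ2 := by
  have h := P.assoc M (𝟭 C) N M N Q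
    (Functor.leftUnitor M).hom (P.id_join_left M hM)
    μ2 h2
    (Functor.rightUnitor N).hom (P.id_join_right N hN)
    μ1 h1
  ext X
  have := congrArg (fun η => η.app X) h
  simpa using this.symm
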